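/- Recursion extracting one variable: if I = (i_1,...,i_n) is nonempty and I' = (i_2,...,i_n), then :y^I: = y_{i_1}·:y^{I'}: − Σ_{U⊆I'} κ[y_{(i_1)+U}]·:y^{I'∖U}:, where (i_1)+U denotes the sequence obtained by prepending i_1 to U. -/
import Mathlib


open MeasureTheory Finset

/-- The moment `E[y^A]` of the labeled family `(y i)_{i ∈ A}`. -/
noncomputable def mom {Ω : Type*} [MeasurableSpace Ω] {ι : Type*}
    (μ : Measure Ω) (y : ι → Ω → ℝ) (A : Finset ι) : ℝ :=
  ∫ ω, ∏ i ∈ A, y i ω ∂μ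

open scoped Classical in
/-- Set partitions of a finite (label) set `A`: finsets of nonempty pairwise
disjoint blocks whose union is `A`. -/
noncomputable def partitionsOf {ι : Type*} (A : Finset ι) : Finset (Finset (Finset ι)) :=
  A.powerset.powerset.filter fun π =>
    (∀ B ∈ π, B.Nonempty) ∧ (∀ B ∈ π, ∀ C ∈ π, B ≠ C → Disjoint B C) ∧ π.sup id = A

/-- The joint cumulant `κ[y_A]`, defined by the (Möbius-inverted form of the)
moments-to-cumulants recursion. -/
noncomputable def cum {Ω : Type*} [MeasurableSpace Ω] {ι : Type*}
    (μ : Measure Ω) (y : ι → Ω → ℝ) (A : Finset ι) : ℝ :=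
  ∑ π ∈ partitionsOf A,
    (-1 : ℝ) ^ (π.card - 1) * (Nat.factorial (π.card - 1)) * ∏ B ∈ π, mom μ y B

/-- The Wick polynomial `:y^I:` defined by the recursion
`:y^I: = y^I − Σ_{∅≠E⊆I} E[y^E]·:y^{I∖E}:`, with `:y^∅: = 1`. -/
noncomputable def wick {Ω : Type*} [MeasurableSpace Ω] {ι : Type*} [DecidableEq ι]
    (μ : Measure Ω) (y : ι → Ω → ℝ) (I : Finset ι) : Ω → ℝ :=
  fun ω => (∏ i ∈ I, y i ω) -
    ∑ E ∈ (I.powerset.filter fun E => E ≠ ∅).attach,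
      mom μ y E.1 * wick μ y (I \ E.1) ω
termination_by I.card
decreasing_by
  have h := E.2
  simp only [Finset.mem_filter, Finset.mem_powerset] at h
  exact Finset.card_lt_card (Finset.sdiff_ssubset h.1 (Finset.nonempty_iff_ne_empty.mpr h.2))

/-! ### Auxiliary lemmas -/

section Helpers
variable {Ω : Type*} [MeasurableSpace Ω] {ι : Type*}

lemma mom_empty (μ : Measure Ω) [IsProbabilityMeasure μ] (y : ι → Ω → ℝ) :
    mom μ y (∅ : Finset ι) = 1 := by
  simp [mom]

lemma mem_partitionsOf {A : Finset ι} {π : Finset (Finset ι)} :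
    π ∈ partitionsOf A ↔ (∀ B ∈ π, B.Nonempty) ∧
      (∀ B ∈ π, ∀ C ∈ π, B ≠ C → Disjoint B C) ∧ (∀ a, a ∈ A ↔ ∃ B ∈ π, a ∈ B) := by
  classical
  simp only [partitionsOf, mem_filter, mem_powerset]
  constructor
  · rintro ⟨h1, h2, h3, h4⟩
    refine ⟨h2, h3, fun a => ?_⟩
    rw [← h4]
    exact Finset.mem_sup
  · rintro ⟨h2, h3, h4⟩
    refine ⟨?_, h2, h3, ?_⟩
    · intro B hB
      rw [Finset.mem_powerset]
      exact fun a haB => (h4 a).mpr ⟨B, hB, haB⟩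
    · ext a
      rw [Finset.mem_sup]
      exact ((h4 a).symm.trans (by simp))

lemma partitionsOf_nonempty_mem {A : Finset ι} {π : Finset (Finset ι)}
    (hA : A.Nonempty) (hπ : π ∈ partitionsOf A) : π.Nonempty := by
  rcases mem_partitionsOf.mp hπ with ⟨-, -, h4⟩
  obtain ⟨a, ha⟩ := hA
  obtain ⟨B, hB, -⟩ := (h4 a).mp ha
  exact ⟨B, hB⟩

lemma partitionsOf_card_one {A : Finset ι} {π : Finset (Finset ι)}
    (hπ : π ∈ partitionsOf A) (hc : π.card = 1) : π = {A} := by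
  rcases Finset.card_eq_one.mp hc with ⟨B, rfl⟩
  rcases mem_partitionsOf.mp hπ with ⟨-, -, h4⟩
  have : B = A := by
    ext a; rw [h4 a]; simp
  rw [this]

lemma singleton_mem_partitionsOf {A : Finset ι} (hA : A.Nonempty) :
    ({A} : Finset (Finset ι)) ∈ partitionsOf A := by
  rw [mem_partitionsOf]
  refine ⟨by simpa using hA, by simp, by simp⟩

lemma empty_notMem_partition {A : Finset ι} {π : Finset (Finset ι)}
    (hπ : π ∈ partitionsOf A) : (∅ : Finset ι) ∉ π := by
  intro h
  exact absurd (mem_partitionsOf.mp hπ).1 (by intro h2; simpa using (h2 ∅ h))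

lemma filter_mem_card [DecidableEq ι] {A : Finset ι} {π : Finset (Finset ι)}
    (hπ : π ∈ partitionsOf A) {a : ι} (ha : a ∈ A) :
    (π.filter fun B => a ∈ B).card = 1 := by
  rcases mem_partitionsOf.mp hπ with ⟨h2, h3, h4⟩
  rcases (h4 a).mp ha with ⟨B, hB, haB⟩
  rw [Finset.card_eq_one]
  refine ⟨B, ?_⟩
  ext C
  simp only [mem_filter, mem_singleton]
  constructor
  · rintro ⟨hC, haC⟩
    by_contra hne
    exact (Finset.disjoint_left.mp (h3 C hC B hB hne) haC) haB
  · rintro rfl; exact ⟨hB, haB⟩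

lemma filter_notMem_card [DecidableEq ι] {A : Finset ι} {π : Finset (Finset ι)}
    (hπ : π ∈ partitionsOf A) {a : ι} (ha : a ∈ A) :
    (π.filter fun B => a ∉ B).card = π.card - 1 := by
  have h := Finset.card_filter_add_card_filter_not (s := π) (p := fun B => a ∈ B)
  have h1 := filter_mem_card hπ ha
  omega

lemma coeff_cancel (k : ℕ) (hk : 2 ≤ k) :
    ((-1:ℝ)^(k-1) * (Nat.factorial (k-1))) +
      (k-1 : ℕ) * ((-1:ℝ)^(k-1-1) * (Nat.factorial (k-1-1))) = 0 := by
  obtain ⟨n, rfl⟩ : ∃ n, k = n + 2 := ⟨k - 2, by omega⟩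
  simp only [Nat.add_sub_cancel, show n+2-1 = n+1 from rfl, show n+1-1 = n from rfl,
    Nat.factorial_succ, pow_succ]
  push_cast
  ring

end Helpers

section KeyLemma
variable {Ω : Type*} [MeasurableSpace Ω] {ι : Type*} [DecidableEq ι]

/-- The one-variable moment–cumulant recursion:
`E[y^{x∪S}] = Σ_{U ⊆ S} κ[y_{x∪U}] · E[y^{S∖U}]`. -/
lemma cum_mom_rec (μ : Measure Ω) [IsProbabilityMeasure μ] (y : ι → Ω → ℝ)
    (x : ι) (S : Finset ι) (hx : x ∉ S) :
    ∑ U ∈ S.powerset, cum μ y (insert x U) * mom μ y (S \ U) = mom μ y (insert x S) := by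
  classical
  set m := mom μ y with hm
  set cc : ℕ → ℝ := fun k => (-1 : ℝ) ^ (k - 1) * (Nat.factorial (k - 1)) with hcc
  -- expand cum and push the multiplication inside
  have expand : ∑ U ∈ S.powerset, cum μ y (insert x U) * m (S \ U) =
      ∑ p ∈ S.powerset.sigma (fun U => partitionsOf (insert x U)),
        cc p.2.card * (∏ B ∈ p.2, m B) * m (S \ p.1) := by
    rw [Finset.sum_sigma]
    refine Finset.sum_congr rfl fun U hU => ?_
    rw [cum, Finset.sum_mul]
  rw [expand]
  -- reindex to pairs (τ, R): τ a partition of insert x S, R either ∅ or a block avoiding x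
  have reindex : ∑ p ∈ S.powerset.sigma (fun U => partitionsOf (insert x U)),
        cc p.2.card * (∏ B ∈ p.2, m B) * m (S \ p.1) =
      ∑ q ∈ (partitionsOf (insert x S)).sigma
          (fun τ => insert ∅ (τ.filter fun B => x ∉ B)),
        cc (q.1.erase q.2).card * (∏ B ∈ q.1.erase q.2, m B) * m q.2 := by
    refine Finset.sum_nbij'
      (i := fun p => ⟨(insert (S \ p.1) p.2).erase ∅, S \ p.1⟩)
      (j := fun q => ⟨S \ q.2, q.1.erase q.2⟩) ?_ ?_ ?_ ?_ ?_
    · -- i maps into the codomain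
      rintro ⟨U, π⟩ hp
      simp only [Finset.mem_sigma, Finset.mem_powerset] at hp ⊢
      obtain ⟨hU, hπ⟩ := hp
      obtain ⟨h2, h3, h4⟩ := mem_partitionsOf.mp hπ
      have hne : (∅ : Finset ι) ∉ π := empty_notMem_partition hπ
      by_cases hUS : U = S
      · subst hUS
        rw [Finset.sdiff_self, Finset.erase_insert hne]
        exact ⟨hπ, Finset.mem_insert_self _ _⟩
      · have hSU : (S \ U).Nonempty := by
          rw [Finset.sdiff_nonempty]; exact fun h => hUS (le_antisymm hU h)
        have hdisj : ∀ a ∈ S \ U, a ∉ insert x U := by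
          intro a ha
          rw [Finset.mem_sdiff] at ha
          simp only [Finset.mem_insert, not_or]
          exact ⟨fun h => hx (h ▸ ha.1), ha.2⟩
        have hnot : S \ U ∉ π := by
          intro h
          obtain ⟨a, ha⟩ := hSU
          exact hdisj a ha ((h4 a).mpr ⟨_, h, ha⟩)
        have hnm : (∅ : Finset ι) ∉ insert (S \ U) π := by
          simp only [Finset.mem_insert, not_or]
          exact ⟨Ne.symm hSU.ne_empty, hne⟩
        have hτ : (insert (S \ U) π).erase ∅ = insert (S \ U) π :=
          Finset.erase_eq_of_notMem hnm
        rw [hτ]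
        constructor
        · rw [mem_partitionsOf]
          refine ⟨?_, ?_, ?_⟩
          · intro B hB
            rcases Finset.mem_insert.mp hB with rfl | hB
            · exact hSU
            · exact h2 B hB
          · intro B hB C hC hBC
            rcases Finset.mem_insert.mp hB with rfl | hB <;>
              rcases Finset.mem_insert.mp hC with rfl | hC
            · exact absurd rfl hBC
            · refine Finset.disjoint_left.mpr fun a haB haC => ?_
              exact hdisj a haB ((h4 a).mpr ⟨C, hC, haC⟩)
            · refine Finset.disjoint_left.mpr fun a haB haC => ?_
              exact hdisj a haC ((h4 a).mpr ⟨B, hB, haB⟩)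
            · exact h3 B hB C hC hBC
          · intro a
            constructor
            · intro ha
              by_cases haSU : a ∈ S \ U
              · exact ⟨S \ U, Finset.mem_insert_self _ _, haSU⟩
              · have : a ∈ insert x U := by
                  rcases Finset.mem_insert.mp ha with rfl | ha
                  · exact Finset.mem_insert_self _ _
                  · rw [Finset.mem_sdiff] at haSU
                    push_neg at haSU
                    exact Finset.mem_insert_of_mem (haSU ha)
                obtain ⟨B, hB, haB⟩ := (h4 a).mp this
                exact ⟨B, Finset.mem_insert_of_mem hB, haB⟩
            · rintro ⟨B, hB, haB⟩
              rcases Finset.mem_insert.mp hB with rfl | hB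
              · exact Finset.mem_insert_of_mem (Finset.mem_sdiff.mp haB).1
              · have := (h4 a).mpr ⟨B, hB, haB⟩
                rcases Finset.mem_insert.mp this with rfl | h
                · exact Finset.mem_insert_self _ _
                · exact Finset.mem_insert_of_mem (hU h)
        · refine Finset.mem_insert_of_mem (Finset.mem_filter.mpr ⟨Finset.mem_insert_self _ _, ?_⟩)
          exact fun h => hx (Finset.mem_sdiff.mp h).1
    · -- j maps into the domain
      rintro ⟨τ, R⟩ hq
      simp only [Finset.mem_sigma, Finset.mem_powerset] at hq ⊢
      obtain ⟨hτ, hR⟩ := hq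
      obtain ⟨h2, h3, h4⟩ := mem_partitionsOf.mp hτ
      have hne : (∅ : Finset ι) ∉ τ := empty_notMem_partition hτ
      rcases Finset.mem_insert.mp hR with rfl | hR
      · rw [Finset.erase_eq_of_notMem hne, Finset.sdiff_empty]
        exact ⟨Finset.Subset.refl S, hτ⟩
      · rw [Finset.mem_filter] at hR
        obtain ⟨hRτ, hxR⟩ := hR
        have hRS : R ⊆ S := by
          intro a haR
          have := (h4 a).mpr ⟨R, hRτ, haR⟩
          rcases Finset.mem_insert.mp this with rfl | h
          · exact absurd haR hxR
          · exact h
        refine ⟨Finset.sdiff_subset, ?_⟩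
        rw [mem_partitionsOf]
        refine ⟨fun B hB => h2 B (Finset.mem_of_mem_erase hB), ?_, ?_⟩
        · intro B hB C hC hBC
          exact h3 B (Finset.mem_of_mem_erase hB) C (Finset.mem_of_mem_erase hC) hBC
        · intro a
          constructor
          · intro ha
            have haR : a ∉ R := by
              rcases Finset.mem_insert.mp ha with rfl | h
              · exact hxR
              · exact (Finset.mem_sdiff.mp h).2
            have : a ∈ insert x S := by
              rcases Finset.mem_insert.mp ha with rfl | h
              · exact Finset.mem_insert_self _ _
              · exact Finset.mem_insert_of_mem (Finset.mem_sdiff.mp h).1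
            obtain ⟨B, hB, haB⟩ := (h4 a).mp this
            refine ⟨B, Finset.mem_erase.mpr ⟨?_, hB⟩, haB⟩
            rintro rfl
            exact haR haB
          · rintro ⟨B, hB, haB⟩
            obtain ⟨hBR, hBτ⟩ := Finset.mem_erase.mp hB
            have haxS := (h4 a).mpr ⟨B, hBτ, haB⟩
            have haR : a ∉ R := fun h =>
              (Finset.disjoint_left.mp (h3 B hBτ R hRτ hBR) haB) h
            rcases Finset.mem_insert.mp haxS with rfl | h
            · exact Finset.mem_insert_self _ _
            · exact Finset.mem_insert_of_mem (Finset.mem_sdiff.mpr ⟨h, haR⟩)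
    · -- left inverse
      rintro ⟨U, π⟩ hp
      simp only [Finset.mem_sigma, Finset.mem_powerset] at hp
      obtain ⟨hU, hπ⟩ := hp
      have hne : (∅ : Finset ι) ∉ π := empty_notMem_partition hπ
      have hUrec : S \ (S \ U) = U := Finset.sdiff_sdiff_eq_self hU
      by_cases hUS : U = S
      · subst hUS
        simp only [Finset.sdiff_self, Finset.erase_insert hne,
          Finset.erase_eq_of_notMem hne, Finset.sdiff_empty]
      · have hSU : (S \ U).Nonempty := by
          rw [Finset.sdiff_nonempty]; exact fun h => hUS (le_antisymm hU h)
        obtain ⟨h2, h3, h4⟩ := mem_partitionsOf.mp hπ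
        have hnot : S \ U ∉ π := by
          intro h
          obtain ⟨a, ha⟩ := hSU
          have ha' := Finset.mem_sdiff.mp ha
          have := (h4 a).mpr ⟨_, h, ha⟩
          rcases Finset.mem_insert.mp this with rfl | hh
          · exact hx ha'.1
          · exact ha'.2 hh
        have hnm : (∅ : Finset ι) ∉ insert (S \ U) π := by
          simp only [Finset.mem_insert, not_or]
          exact ⟨Ne.symm hSU.ne_empty, hne⟩
        have hτ : (insert (S \ U) π).erase ∅ = insert (S \ U) π :=
          Finset.erase_eq_of_notMem hnm
        simp only [hτ, hUrec, Finset.erase_insert hnot]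
    · -- right inverse
      rintro ⟨τ, R⟩ hq
      simp only [Finset.mem_sigma, Finset.mem_powerset] at hq
      obtain ⟨hτ, hR⟩ := hq
      obtain ⟨h2, h3, h4⟩ := mem_partitionsOf.mp hτ
      have hne : (∅ : Finset ι) ∉ τ := empty_notMem_partition hτ
      rcases Finset.mem_insert.mp hR with rfl | hR
      · simp only [Finset.sdiff_empty, Finset.sdiff_self,
          Finset.erase_eq_of_notMem hne, Finset.erase_insert hne]
      · rw [Finset.mem_filter] at hR
        obtain ⟨hRτ, hxR⟩ := hR
        have hRS : R ⊆ S := by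
          intro a haR
          have := (h4 a).mpr ⟨R, hRτ, haR⟩
          rcases Finset.mem_insert.mp this with rfl | h
          · exact absurd haR hxR
          · exact h
        have hRrec : S \ (S \ R) = R := Finset.sdiff_sdiff_eq_self hRS
        simp only [hRrec, Finset.insert_erase hRτ, Finset.erase_eq_of_notMem hne]
    · -- summands agree
      rintro ⟨U, π⟩ hp
      simp only [Finset.mem_sigma, Finset.mem_powerset] at hp
      obtain ⟨hU, hπ⟩ := hp
      have hne : (∅ : Finset ι) ∉ π := empty_notMem_partition hπ
      have herase : ((insert (S \ U) π).erase ∅).erase (S \ U) = π := by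
        by_cases hUS : U = S
        · subst hUS
          rw [Finset.sdiff_self, Finset.erase_insert hne, Finset.erase_eq_of_notMem hne]
        · have hSU : (S \ U).Nonempty := by
            rw [Finset.sdiff_nonempty]; exact fun h => hUS (le_antisymm hU h)
          obtain ⟨h2, h3, h4⟩ := mem_partitionsOf.mp hπ
          have hnot : S \ U ∉ π := by
            intro h
            obtain ⟨a, ha⟩ := hSU
            have ha' := Finset.mem_sdiff.mp ha
            have := (h4 a).mpr ⟨_, h, ha⟩
            rcases Finset.mem_insert.mp this with rfl | hh
            · exact hx ha'.1
            · exact ha'.2 hh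
          have hnm : (∅ : Finset ι) ∉ insert (S \ U) π := by
            simp only [Finset.mem_insert, not_or]
            exact ⟨Ne.symm hSU.ne_empty, hne⟩
          rw [Finset.erase_eq_of_notMem hnm, Finset.erase_insert hnot]
      simp only [herase]
  rw [reindex, Finset.sum_sigma]
  -- now evaluate the outer sum: all partitions with ≥ 2 blocks cancel
  have inner : ∀ τ ∈ partitionsOf (insert x S),
      (∑ R ∈ insert ∅ (τ.filter fun B => x ∉ B),
        cc (τ.erase R).card * (∏ B ∈ τ.erase R, m B) * m R) =
      if τ = {insert x S} then m (insert x S) else 0 := by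
    intro τ hτ
    have hne : (∅ : Finset ι) ∉ τ := empty_notMem_partition hτ
    have hne' : (∅ : Finset ι) ∉ τ.filter fun B => x ∉ B :=
      fun h => hne (Finset.mem_of_mem_filter _ h)
    have hcard : 1 ≤ τ.card :=
      Finset.card_pos.mpr (partitionsOf_nonempty_mem (Finset.insert_nonempty _ _) hτ)
    rw [Finset.sum_insert hne', Finset.erase_eq_of_notMem hne,
      show m ∅ = 1 from mom_empty μ y, mul_one]
    have hfc : (τ.filter fun B => x ∉ B).card = τ.card - 1 :=
      filter_notMem_card hτ (Finset.mem_insert_self x S)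
    have hsum2 : (∑ R ∈ τ.filter fun B => x ∉ B,
        cc (τ.erase R).card * (∏ B ∈ τ.erase R, m B) * m R) =
        (τ.card - 1 : ℕ) * (cc (τ.card - 1) * ∏ B ∈ τ, m B) := by
      rw [Finset.sum_congr rfl (g := fun R => cc (τ.card - 1) * ∏ B ∈ τ, m B)
        (fun R hR => ?_), Finset.sum_const, hfc, nsmul_eq_mul]
      have hRτ := Finset.mem_of_mem_filter _ hR
      rw [Finset.card_erase_of_mem hRτ, mul_assoc, Finset.prod_erase_mul _ _ hRτ]
    rw [hsum2]
    by_cases hc1 : τ.card = 1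
    · have hτ1 : τ = {insert x S} := partitionsOf_card_one hτ hc1
      rw [if_pos hτ1, hτ1]
      simp [hcc, hc1, hτ1]
    · have hτ1 : τ ≠ {insert x S} := by
        rintro rfl; simp at hc1
      rw [if_neg hτ1]
      have hz : cc τ.card + (τ.card - 1 : ℕ) * cc (τ.card - 1) = 0 :=
        coeff_cancel τ.card (by omega)
      calc cc τ.card * ∏ B ∈ τ, m B + (τ.card - 1 : ℕ) * (cc (τ.card - 1) * ∏ B ∈ τ, m B)
          = (cc τ.card + (τ.card - 1 : ℕ) * cc (τ.card - 1)) * ∏ B ∈ τ, m B := by ring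
        _ = 0 := by rw [hz, zero_mul]
  rw [Finset.sum_congr rfl inner, Finset.sum_ite_eq',
    if_pos (singleton_mem_partitionsOf (Finset.insert_nonempty _ _))]

end KeyLemma

section WickLemmas
variable {Ω : Type*} [MeasurableSpace Ω] {ι : Type*} [DecidableEq ι]

lemma wick_unfold (μ : Measure Ω) (y : ι → Ω → ℝ) (I : Finset ι) (ω : Ω) :
    wick μ y I ω = (∏ i ∈ I, y i ω) -
      ∑ E ∈ I.powerset.filter fun E => E ≠ ∅, mom μ y E * wick μ y (I \ E) ω := by
  rw [wick]
  congr 1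
  exact Finset.sum_attach _ (fun E => mom μ y E * wick μ y (I \ E) ω)

lemma wick_key (μ : Measure Ω) [IsProbabilityMeasure μ] (y : ι → Ω → ℝ) :
    ∀ (n : ℕ) (I : Finset ι), I.card ≤ n → ∀ x ∈ I, ∀ ω,
      wick μ y I ω = y x ω * wick μ y (I.erase x) ω -
        ∑ U ∈ (I.erase x).powerset,
          cum μ y (insert x U) * wick μ y ((I.erase x) \ U) ω := by
  intro n
  induction n with
  | zero =>
    intro I hI x hx ω
    exact absurd hx (by simp [Finset.card_eq_zero.mp (Nat.le_zero.mp hI)])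
  | succ n ih =>
    intro I hI x hx ω
    classical
    -- split the defining sum of `wick I` according to whether `x ∈ E`
    have hsplit :
        (∑ E ∈ I.powerset.filter fun E => E ≠ ∅, mom μ y E * wick μ y (I \ E) ω)
        = (∑ E ∈ (I.erase x).powerset.filter fun E => E ≠ ∅,
            mom μ y E * wick μ y (I \ E) ω)
          + ∑ F ∈ (I.erase x).powerset,
              mom μ y (insert x F) * wick μ y ((I.erase x) \ F) ω := by
      rw [← Finset.sum_filter_add_sum_filter_not (I.powerset.filter fun E => E ≠ ∅)
        (fun E => x ∈ E), add_comm]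
      congr 1
      · apply Finset.sum_congr
        · ext E
          simp only [Finset.mem_filter, Finset.mem_powerset, Finset.subset_erase]
          tauto
        · intros; rfl
      · refine Finset.sum_nbij' (i := fun E => E.erase x) (j := fun F => insert x F)
          ?_ ?_ ?_ ?_ ?_
        · intro E hE
          simp only [Finset.mem_filter, Finset.mem_powerset] at hE ⊢
          exact Finset.erase_subset_erase _ hE.1.1
        · intro F hF
          simp only [Finset.mem_filter, Finset.mem_powerset] at hF ⊢
          have hFI : F ⊆ I := hF.trans (Finset.erase_subset _ _)
          exact ⟨⟨Finset.insert_subset hx hFI, Finset.insert_ne_empty _ _⟩,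
            Finset.mem_insert_self _ _⟩
        · intro E hE
          simp only [Finset.mem_filter, Finset.mem_powerset] at hE
          exact Finset.insert_erase hE.2
        · intro F hF
          simp only [Finset.mem_powerset] at hF
          have hxF : x ∉ F := fun h => (Finset.mem_erase.mp (hF h)).1 rfl
          exact Finset.erase_insert hxF
        · intro E hE
          simp only [Finset.mem_filter, Finset.mem_powerset] at hE
          have hxE : x ∈ E := hE.2
          have hsd : I \ E = (I.erase x) \ (E.erase x) := by
            ext a
            simp only [Finset.mem_sdiff, Finset.mem_erase]
            constructor
            · rintro ⟨haI, haE⟩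
              exact ⟨⟨fun h => haE (h ▸ hxE), haI⟩, fun h => haE h.2⟩
            · rintro ⟨⟨hax, haI⟩, h⟩
              exact ⟨haI, fun haE => h ⟨hax, haE⟩⟩
          rw [Finset.insert_erase hxE, hsd]
    -- apply the induction hypothesis to `I \ E`
    have eE : ∀ E ∈ (I.erase x).powerset.filter fun E => E ≠ ∅,
        wick μ y (I \ E) ω = y x ω * wick μ y ((I.erase x) \ E) ω -
          ∑ U ∈ ((I.erase x) \ E).powerset,
            cum μ y (insert x U) * wick μ y (((I.erase x) \ E) \ U) ω := by
      intro E hE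
      simp only [Finset.mem_filter, Finset.mem_powerset] at hE
      have hEI : E ⊆ I := hE.1.trans (Finset.erase_subset _ _)
      have hxI : x ∈ I \ E :=
        Finset.mem_sdiff.mpr ⟨hx, fun h => (Finset.mem_erase.mp (hE.1 h)).1 rfl⟩
      have hcard : (I \ E).card ≤ n := by
        have h1 : (I \ E).card < I.card :=
          Finset.card_lt_card
            (Finset.sdiff_ssubset hEI (Finset.nonempty_iff_ne_empty.mpr hE.2))
        omega
      have h := ih (I \ E) hcard x hxI ω
      rwa [← Finset.erase_sdiff_comm] at h
    -- the combinatorial core: B + D = C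
    have key : (∑ E ∈ (I.erase x).powerset.filter fun E => E ≠ ∅,
          mom μ y E * ∑ U ∈ ((I.erase x) \ E).powerset,
            cum μ y (insert x U) * wick μ y (((I.erase x) \ E) \ U) ω)
        + ∑ U ∈ (I.erase x).powerset,
            cum μ y (insert x U) * wick μ y ((I.erase x) \ U) ω
        = ∑ F ∈ (I.erase x).powerset,
            mom μ y (insert x F) * wick μ y ((I.erase x) \ F) ω := by
      have hfempty : (I.erase x).powerset.filter (fun E => E = ∅) = {∅} := by
        ext E
        simp only [Finset.mem_filter, Finset.mem_powerset, Finset.mem_singleton]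
        exact ⟨fun h => h.2, fun h => ⟨by simp [h], h⟩⟩
      have split2 : ∑ E ∈ (I.erase x).powerset,
            mom μ y E * ∑ U ∈ ((I.erase x) \ E).powerset,
              cum μ y (insert x U) * wick μ y (((I.erase x) \ E) \ U) ω
          = (∑ U ∈ (I.erase x).powerset,
              cum μ y (insert x U) * wick μ y ((I.erase x) \ U) ω)
            + ∑ E ∈ (I.erase x).powerset.filter fun E => E ≠ ∅,
                mom μ y E * ∑ U ∈ ((I.erase x) \ E).powerset,
                  cum μ y (insert x U) * wick μ y (((I.erase x) \ E) \ U) ω := by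
        rw [← Finset.sum_filter_add_sum_filter_not ((I.erase x).powerset)
          (fun E => E = ∅), hfempty, Finset.sum_singleton, Finset.sdiff_empty,
          mom_empty μ y, one_mul]
      rw [add_comm] at split2
      rw [← split2]
      -- reindex the double sum by S = E ∪ U
      have expand2 : ∑ E ∈ (I.erase x).powerset,
            mom μ y E * ∑ U ∈ ((I.erase x) \ E).powerset,
              cum μ y (insert x U) * wick μ y (((I.erase x) \ E) \ U) ω
          = ∑ p ∈ (I.erase x).powerset.sigma (fun E => ((I.erase x) \ E).powerset),
              mom μ y p.1 * (cum μ y (insert x p.2) *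
                wick μ y (((I.erase x) \ p.1) \ p.2) ω) := by
        rw [Finset.sum_sigma]
        exact Finset.sum_congr rfl fun E hE => Finset.mul_sum _ _ _
      rw [expand2]
      have reidx : ∑ p ∈ (I.erase x).powerset.sigma (fun E => ((I.erase x) \ E).powerset),
            mom μ y p.1 * (cum μ y (insert x p.2) *
              wick μ y (((I.erase x) \ p.1) \ p.2) ω)
          = ∑ q ∈ (I.erase x).powerset.sigma (fun S => S.powerset),
              cum μ y (insert x q.2) * mom μ y (q.1 \ q.2) *
                wick μ y ((I.erase x) \ q.1) ω := by
        refine Finset.sum_nbij' (i := fun p => ⟨p.1 ∪ p.2, p.2⟩)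
          (j := fun q => ⟨q.1 \ q.2, q.2⟩) ?_ ?_ ?_ ?_ ?_
        · rintro ⟨E, U⟩ hp
          simp only [Finset.mem_sigma, Finset.mem_powerset] at hp ⊢
          obtain ⟨hE, hU⟩ := hp
          exact ⟨Finset.union_subset hE (hU.trans Finset.sdiff_subset),
            Finset.subset_union_right⟩
        · rintro ⟨S, U⟩ hq
          simp only [Finset.mem_sigma, Finset.mem_powerset] at hq ⊢
          obtain ⟨hS, hU⟩ := hq
          refine ⟨Finset.sdiff_subset.trans hS, fun a haU => ?_⟩
          rw [Finset.mem_sdiff]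
          exact ⟨hS (hU haU), fun h => (Finset.mem_sdiff.mp h).2 haU⟩
        · rintro ⟨E, U⟩ hp
          simp only [Finset.mem_sigma, Finset.mem_powerset] at hp
          obtain ⟨hE, hU⟩ := hp
          have : (E ∪ U) \ U = E := by
            ext a
            simp only [Finset.mem_sdiff, Finset.mem_union]
            constructor
            · rintro ⟨h1 | h1, h2⟩
              · exact h1
              · exact absurd h1 h2
            · intro haE
              exact ⟨Or.inl haE, fun haU => (Finset.mem_sdiff.mp (hU haU)).2 haE⟩
          simp only [this]
        · rintro ⟨S, U⟩ hq
          simp only [Finset.mem_sigma, Finset.mem_powerset] at hq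
          simp only [Finset.sdiff_union_of_subset hq.2]
        · rintro ⟨E, U⟩ hp
          simp only [Finset.mem_sigma, Finset.mem_powerset] at hp
          obtain ⟨hE, hU⟩ := hp
          have h1 : (E ∪ U) \ U = E := by
            ext a
            simp only [Finset.mem_sdiff, Finset.mem_union]
            constructor
            · rintro ⟨h1 | h1, h2⟩
              · exact h1
              · exact absurd h1 h2
            · intro haE
              exact ⟨Or.inl haE, fun haU => (Finset.mem_sdiff.mp (hU haU)).2 haE⟩
          have h2 : ((I.erase x) \ E) \ U = (I.erase x) \ (E ∪ U) := by
            ext a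
            simp only [Finset.mem_sdiff, Finset.mem_union]
            tauto
          rw [h1, h2]
          ring
      rw [reidx, Finset.sum_sigma]
      refine Finset.sum_congr rfl fun S hS => ?_
      dsimp only
      rw [← Finset.sum_mul]
      have hxS : x ∉ S := fun h =>
        (Finset.mem_erase.mp ((Finset.mem_powerset.mp hS) h)).1 rfl
      rw [cum_mom_rec μ y x S hxS]
    -- put everything together
    rw [wick_unfold μ y I ω, hsplit]
    have esumQ : ∑ E ∈ (I.erase x).powerset.filter fun E => E ≠ ∅,
          mom μ y E * wick μ y (I \ E) ω
        = y x ω * (∑ E ∈ (I.erase x).powerset.filter fun E => E ≠ ∅,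
            mom μ y E * wick μ y ((I.erase x) \ E) ω)
          - ∑ E ∈ (I.erase x).powerset.filter fun E => E ≠ ∅,
              mom μ y E * ∑ U ∈ ((I.erase x) \ E).powerset,
                cum μ y (insert x U) * wick μ y (((I.erase x) \ E) \ U) ω := by
      rw [Finset.mul_sum, ← Finset.sum_sub_distrib]
      refine Finset.sum_congr rfl fun E hE => ?_
      rw [eE E hE]; ring
    rw [esumQ]
    have eW' : y x ω * wick μ y (I.erase x) ω
        = y x ω * ∏ i ∈ I.erase x, y i ω
          - y x ω * ∑ E ∈ (I.erase x).powerset.filter fun E => E ≠ ∅,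
              mom μ y E * wick μ y ((I.erase x) \ E) ω := by
      rw [wick_unfold μ y (I.erase x) ω]; ring
    rw [eW', ← Finset.mul_prod_erase I _ hx]
    linarith [key]

end WickLemmas

/-- recursion extracting one variable from a Wick polynomial. -/
theorem wick_extract_one {Ω : Type*} [MeasurableSpace Ω] {ι : Type*} [DecidableEq ι]
    (μ : Measure Ω) [IsProbabilityMeasure μ] (y : ι → Ω → ℝ)
    (I : Finset ι) (x : ι) (hx : x ∈ I)
    (hint : ∀ A ⊆ I, Integrable (fun ω => ∏ i ∈ A, y i ω) μ) :
    ∀ ω, wick μ y I ω =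
      y x ω * wick μ y (I.erase x) ω -
        ∑ U ∈ (I.erase x).powerset, cum μ y (insert x U) * wick μ y ((I.erase x) \ U) ω := by
  intro ω
  exact wick_key μ y I.card I le_rfl x hx ω
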